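/- Let λ ↦ α̂_K(λ) = (Z^T(I + λP_A)Z)^{-1} Z^T(I + λP_A)Y be defined for λ ≥ 0, where Z^T Z is positive definite and P_A is an orthogonal projection. Then the map λ ↦ α̂_K(λ) is continuous on [0,∞), and if additionally Z^T P_A Z is positive definite then lim_{λ→∞} α̂_K(λ) = (Z^T P_A Z)^{-1} Z^T P_A Y. -/

import Mathlib

open Matrix

private lemma posSemidef_smul_aux {m : ℕ} {A : Matrix (Fin m) (Fin m) ℝ}
    (hA : A.PosSemidef) {t : ℝ} (ht : 0 ≤ t) : (t • A).PosSemidef := by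
  refine ⟨?_, fun x => ?_⟩
  · have h1 := hA.1
    unfold Matrix.IsHermitian at *
    rw [conjTranspose_smul, h1, star_trivial]
  · exact (hA.smul ht).2 x

private lemma aux_cont {k : ℕ} {S : Set ℝ} {A : ℝ → Matrix (Fin k) (Fin k) ℝ}
    {w : ℝ → Fin k → ℝ} (hA : Continuous A) (hw : Continuous w)
    (hdet : ∀ t ∈ S, (A t).det ≠ 0) :
    ContinuousOn (fun t => ((A t)⁻¹).mulVec (w t)) S := by
  have hrw : ∀ t, ((A t)⁻¹).mulVec (w t)
      = (A t).det⁻¹ • ((A t).adjugate.mulVec (w t)) := by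
    intro t
    rw [Matrix.inv_def, Ring.inverse_eq_inv', Matrix.smul_mulVec]
  simp_rw [hrw]
  exact (hA.matrix_det.continuousOn.inv₀ hdet).smul
    ((hA.matrix_adjugate.matrix_mulVec hw).continuousOn)

/-- The K-class path `λ ↦ α̂_K(λ) = (Zᵀ(I + λP_A)Z)⁻¹ Zᵀ(I + λP_A)Y` is
continuous on `[0,∞)`, and if moreover `Zᵀ P_A Z` is positive definite, then
`α̂_K(λ) → (Zᵀ P_A Z)⁻¹ Zᵀ P_A Y` as `λ → ∞`. -/
theorem kclass_path_continuous_and_limit {n k : ℕ}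
    (Z : Matrix (Fin n) (Fin k) ℝ) (Y : Fin n → ℝ)
    (PA : Matrix (Fin n) (Fin n) ℝ)
    (hPsymm : PAᵀ = PA) (hPidem : PA * PA = PA)
    (hZ : (Zᵀ * Z).PosDef) :
    let αK : ℝ → (Fin k → ℝ) := fun lam =>
      ((Zᵀ * (1 + lam • PA) * Z)⁻¹).mulVec ((Zᵀ * (1 + lam • PA)).mulVec Y)
    ContinuousOn αK (Set.Ici 0) ∧
      ((Zᵀ * PA * Z).PosDef →
        Filter.Tendsto αK Filter.atTop
          (nhds (((Zᵀ * PA * Z)⁻¹).mulVec ((Zᵀ * PA).mulVec Y)))) := by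
  intro αK
  set B := Zᵀ * Z with hB
  set C := Zᵀ * PA * Z with hC
  set D := Zᵀ * PA with hD
  -- C is positive semidefinite
  have hCsd : C.PosSemidef := by
    have h := Matrix.posSemidef_conjTranspose_mul_self (PA * Z)
    rwa [Matrix.conjTranspose_eq_transpose_of_trivial, Matrix.transpose_mul, hPsymm,
      Matrix.mul_assoc, ← Matrix.mul_assoc PA PA Z, hPidem, ← Matrix.mul_assoc] at h
  have key1 : ∀ lam : ℝ, Zᵀ * (1 + lam • PA) = Zᵀ + lam • D := fun lam => by
    rw [Matrix.mul_add, Matrix.mul_one, Matrix.mul_smul, hD]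
  have key2 : ∀ lam : ℝ, Zᵀ * (1 + lam • PA) * Z = B + lam • C := fun lam => by
    rw [key1, Matrix.add_mul, Matrix.smul_mul, hB, hC, hD]
  have hαK : αK = fun lam =>
      ((B + lam • C)⁻¹).mulVec ((Zᵀ + lam • D).mulVec Y) := by
    funext lam
    show ((Zᵀ * (1 + lam • PA) * Z)⁻¹).mulVec ((Zᵀ * (1 + lam • PA)).mulVec Y) = _
    rw [key2, key1]
  -- positive definiteness for lam ≥ 0
  have hpos : ∀ lam : ℝ, 0 ≤ lam → (B + lam • C).PosDef := fun lam hlam =>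
    hZ.add_posSemidef (posSemidef_smul_aux hCsd hlam)
  have hAcont : Continuous (fun lam : ℝ => B + lam • C) :=
    continuous_const.add (continuous_id.smul continuous_const)
  have hwcont : Continuous (fun lam : ℝ => (Zᵀ + lam • D).mulVec Y) :=
    (continuous_const.add (continuous_id.smul continuous_const)).matrix_mulVec
      continuous_const
  constructor
  · rw [hαK]
    exact aux_cont hAcont hwcont fun t ht => ((hpos t ht).det_pos).ne'
  · intro hCpd
    -- the auxiliary path h
    set h : ℝ → Fin k → ℝ := fun t =>
      ((t • B + C)⁻¹).mulVec ((t • Zᵀ + D).mulVec Y) with hh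
    have hA'cont : Continuous (fun t : ℝ => t • B + C) :=
      (continuous_id.smul continuous_const).add continuous_const
    have hw'cont : Continuous (fun t : ℝ => (t • Zᵀ + D).mulVec Y) :=
      ((continuous_id.smul continuous_const).add continuous_const).matrix_mulVec
        continuous_const
    set U : Set ℝ := {t | (t • B + C).det ≠ 0} with hU
    have hUopen : IsOpen U :=
      (isOpen_compl_singleton).preimage hA'cont.matrix_det
    have h0U : (0 : ℝ) ∈ U := by
      show ((0 : ℝ) • B + C).det ≠ 0
      rw [zero_smul, zero_add]
      exact hCpd.det_pos.ne'
    have hcontU : ContinuousOn h U := aux_cont hA'cont hw'cont fun t ht => ht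
    have hcontAt : ContinuousAt h 0 :=
      hcontU.continuousAt (hUopen.mem_nhds h0U)
    have h0 : h 0 = ((Zᵀ * PA * Z)⁻¹).mulVec ((Zᵀ * PA).mulVec Y) := by
      rw [hh]
      simp only [zero_smul, zero_add]
      rfl
    have htend : Filter.Tendsto (fun lam : ℝ => h lam⁻¹) Filter.atTop (nhds (h 0)) :=
      hcontAt.tendsto.comp tendsto_inv_atTop_zero
    rw [← h0, hαK]
    refine Filter.Tendsto.congr' ?_ htend
    filter_upwards [Filter.eventually_gt_atTop 0] with lam hlam
    have hlam0 : lam ≠ 0 := hlam.ne'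
    have hMpd : (lam⁻¹ • B + C).PosDef :=
      Matrix.PosDef.posSemidef_add
        (posSemidef_smul_aux hZ.posSemidef (inv_nonneg.2 hlam.le)) hCpd
    have hMdet : IsUnit (lam⁻¹ • B + C).det := hMpd.det_pos.ne'.isUnit
    have e1 : B + lam • C = lam • (lam⁻¹ • B + C) := by
      rw [smul_add, smul_smul, mul_inv_cancel₀ hlam0, one_smul]
    have e2 : Zᵀ + lam • D = lam • (lam⁻¹ • Zᵀ + D) := by
      rw [smul_add, smul_smul, mul_inv_cancel₀ hlam0, one_smul]
    haveI : Invertible lam := invertibleOfNonzero hlam0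
    show ((lam⁻¹ • B + C)⁻¹) *ᵥ ((lam⁻¹ • Zᵀ + D) *ᵥ Y)
        = ((B + lam • C)⁻¹) *ᵥ ((Zᵀ + lam • D) *ᵥ Y)
    rw [e1, e2, Matrix.inv_smul (A := lam⁻¹ • B + C) lam hMdet, Matrix.smul_mulVec,
      Matrix.smul_mulVec, Matrix.mulVec_smul, smul_smul,
      invOf_mul_self, one_smul]
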